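/- Let F_7 be the simple graph on vertex set {v_1, ..., v_7} that is the complement of the graph with edge set {v_1v_2, v_1v_3, v_2v_3, v_2v_4, v_4v_5, v_5v_6, v_5v_7, v_6v_7}. Then F_7 has 13 edges and F_7 → (P_3, C_7). -/

import Mathlib

open SimpleGraph

/-- `F` contains a copy of `G` (an injective graph homomorphism from `G` to `F`). -/
def Contains {α β : Type*} (F : SimpleGraph α) (G : SimpleGraph β) : Prop :=
  ∃ f : G →g F, Function.Injective f

/-- `F → (G, H)`: for every red/blue coloring of the edges of `F` (given by the spanning
subgraph `R ≤ F` of red edges, the other edges of `F` being blue), there is a red copy of `G`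
or a blue copy of `H`. -/
def Arrows {α β γ : Type*} (F : SimpleGraph α) (G : SimpleGraph β) (H : SimpleGraph γ) : Prop :=
  ∀ R : SimpleGraph α, R ≤ F → Contains R G ∨ Contains (F \ R) H

/-- The graph `F₇`: the complement of the graph on 7 vertices with the listed 8 edges
(vertex `vᵢ` of the paper is `i - 1 : Fin 7`). -/
def F7 : SimpleGraph (Fin 7) :=
  (fromEdgeSet {s(0,1), s(0,2), s(1,2), s(1,3), s(3,4), s(4,5), s(4,6), s(5,6)})ᶜ

instance : DecidableRel F7.Adj := fun a b => by
  simp only [F7, compl_adj, fromEdgeSet_adj, Set.mem_insert_iff, Set.mem_singleton_iff]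
  infer_instance

/-- first endpoints of the 13 edges of `F7` -/
def ea : Fin 13 → Fin 7 := ![0,0,0,0,1,1,1,2,2,2,2,3,3]
/-- second endpoints of the 13 edges of `F7` -/
def eb : Fin 13 → Fin 7 := ![3,4,5,6,4,5,6,3,4,5,6,5,6]
/-- `sharesP i j` : the edges `i ≠ j` share a vertex -/
def sharesP : Fin 13 → Fin 13 → Bool := ![
  ![false,true,true,true,false,false,false,true,false,false,false,true,true],
  ![true,false,true,true,true,false,false,false,true,false,false,false,false],
  ![true,true,false,true,false,true,false,false,false,true,false,true,false],
  ![true,true,true,false,false,false,true,false,false,false,true,false,true],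
  ![false,true,false,false,false,true,true,false,true,false,false,false,false],
  ![false,false,true,false,true,false,true,false,false,true,false,true,false],
  ![false,false,false,true,true,true,false,false,false,false,true,false,true],
  ![true,false,false,false,false,false,false,false,true,true,true,true,true],
  ![false,true,false,false,true,false,false,true,false,true,true,false,false],
  ![false,false,true,false,false,true,false,true,true,false,true,true,false],
  ![false,false,false,true,false,false,true,true,true,true,false,false,true],
  ![true,false,true,false,false,true,false,true,false,true,false,false,true],
  ![true,false,false,true,false,false,true,true,false,false,true,true,false]]
/-- the 30 maximal matchings of `F7` (as triples of edge indices) -/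
def MT : Fin 30 → Fin 3 → Fin 13 := ![
  ![0,4,9], ![0,4,10], ![0,5,8], ![0,5,10], ![0,6,8], ![0,6,9],
  ![1,5,7], ![1,5,10], ![1,5,12], ![1,6,7], ![1,6,9], ![1,6,11],
  ![1,9,12], ![1,10,11], ![2,4,7], ![2,4,10], ![2,4,12], ![2,6,7],
  ![2,6,8], ![2,8,12], ![3,4,7], ![3,4,9], ![3,4,11], ![3,5,7],
  ![3,5,8], ![3,8,11], ![4,9,12], ![4,10,11], ![5,8,12], ![6,8,11]]
/-- Hamiltonian cycles avoiding each maximal matching -/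
def g : Fin 30 → Fin 7 → Fin 7 := ![
  ![0,4,2,3,5,1,6], ![0,4,2,3,5,1,6], ![0,4,1,6,2,3,5], ![0,4,1,6,3,2,5],
  ![0,4,1,5,2,3,6], ![0,4,1,5,3,2,6], ![0,3,5,2,4,1,6], ![0,3,5,2,4,1,6],
  ![0,3,5,2,4,1,6], ![0,3,5,1,4,2,6], ![0,3,5,1,4,2,6], ![0,3,6,2,4,1,5],
  ![0,3,5,1,4,2,6], ![0,3,6,1,4,2,5], ![0,3,5,1,6,2,4], ![0,3,6,1,5,2,4],
  ![0,3,5,1,6,2,4], ![0,3,5,1,4,2,6], ![0,3,6,2,5,1,4], ![0,3,5,2,6,1,4],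
  ![0,3,5,1,6,2,4], ![0,3,5,1,6,2,4], ![0,3,6,1,5,2,4], ![0,3,5,2,6,1,4],
  ![0,3,5,2,6,1,4], ![0,3,6,2,5,1,4], ![0,3,5,1,6,2,4], ![0,3,6,1,5,2,4],
  ![0,3,5,2,6,1,4], ![0,3,6,2,5,1,4]]

lemma hK1 : ∀ x y : Fin 7, F7.Adj x y →
    ∃ i : Fin 13, (ea i = x ∧ eb i = y) ∨ (ea i = y ∧ eb i = x) := by decide

lemma hK3 : ∀ i j : Fin 13, sharesP i j = true → ∃ v x y : Fin 7, x ≠ y ∧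
    ((ea i = v ∧ eb i = x) ∨ (ea i = x ∧ eb i = v)) ∧
    ((ea j = v ∧ eb j = y) ∨ (ea j = y ∧ eb j = v)) := by decide

lemma hdiag : ∀ i : Fin 13, sharesP i i = false := by decide

lemma hK2 : ∀ i j l : Fin 13,
    (sharesP i j = false ∧ sharesP i l = false ∧ sharesP j l = false) →
    ∃ k : Fin 30, (∃ t : Fin 3, MT k t = i) ∧ (∃ t : Fin 3, MT k t = j) ∧
      (∃ t : Fin 3, MT k t = l) := by decide

lemma hK5 : ∀ i j l m : Fin 13, i ≠ j → i ≠ l → i ≠ m → j ≠ l → j ≠ m → l ≠ m →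
    sharesP i j = false → sharesP i l = false → sharesP i m = false →
    sharesP j l = false → sharesP j m = false → sharesP l m = false → False := by decide

lemma hK4 : ∀ k : Fin 30, (∀ a b : Fin 7, a ≠ b → g k a ≠ g k b) ∧
    ∀ a b : Fin 7, (cycleGraph 7).Adj a b → F7.Adj (g k a) (g k b) ∧
      ∀ j : Fin 3, ¬((ea (MT k j) = g k a ∧ eb (MT k j) = g k b) ∨
        (ea (MT k j) = g k b ∧ eb (MT k j) = g k a)) := by decide

lemma hP3 : ∀ a b : Fin 3, (pathGraph 3).Adj a b →
    (a = 0 ∧ b = 1) ∨ (a = 1 ∧ b = 0) ∨ (a = 1 ∧ b = 2) ∨ (a = 2 ∧ b = 1) := by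
  intro a b h
  rw [pathGraph_adj] at h
  fin_cases a <;> fin_cases b <;> simp_all

/-- blue step: if every red edge lies in the maximal matching `k`,
then the blue graph contains `C₇`. -/
lemma blue (R : SimpleGraph (Fin 7)) (hR : R ≤ F7) (k : Fin 30)
    (hcov : ∀ x y, R.Adj x y → ∃ j : Fin 3,
      (ea (MT k j) = x ∧ eb (MT k j) = y) ∨ (ea (MT k j) = y ∧ eb (MT k j) = x)) :
    Contains (F7 \ R) (cycleGraph 7) := by
  obtain ⟨hinj, hadj⟩ := hK4 k
  refine ⟨⟨g k, ?_⟩, fun a b hab => by_contra fun hne => hinj a b hne hab⟩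
  intro a b hab
  rw [sdiff_adj]
  obtain ⟨hF, hmiss⟩ := hadj a b hab
  refine ⟨hF, fun hr => ?_⟩
  obtain ⟨j, hj⟩ := hcov _ _ hr
  exact hmiss j hj

theorem stmt_2 : F7.edgeSet.ncard = 13 ∧ Arrows F7 (pathGraph 3) (cycleGraph 7) := by
  constructor
  · rw [Set.ncard_eq_toFinset_card']
    decide
  · intro R hR
    classical
    set c : Fin 13 → Bool := fun i => decide (R.Adj (ea i) (eb i)) with hc
    have hcR : ∀ i, c i = true → R.Adj (ea i) (eb i) := fun i h => of_decide_eq_true h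
    have hRc : ∀ i, R.Adj (ea i) (eb i) → c i = true := fun i h => decide_eq_true h
    by_cases hp : ∃ i j : Fin 13, c i = true ∧ c j = true ∧ sharesP i j = true
    · -- red P₃
      left
      obtain ⟨i, j, hi, hj, hs⟩ := hp
      obtain ⟨v, x, y, hxy, hie, hje⟩ := hK3 i j hs
      have hvx : R.Adj v x := by
        rcases hie with ⟨h1, h2⟩ | ⟨h1, h2⟩
        · rw [← h1, ← h2]; exact hcR i hi
        · rw [← h1, ← h2]; exact (hcR i hi).symm
      have hvy : R.Adj v y := by
        rcases hje with ⟨h1, h2⟩ | ⟨h1, h2⟩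
        · rw [← h1, ← h2]; exact hcR j hj
        · rw [← h1, ← h2]; exact (hcR j hj).symm
      have hvx' : v ≠ x := hvx.ne
      have hvy' : v ≠ y := hvy.ne
      have hfinj : Function.Injective ![x, v, y] := by
        intro a b hab
        fin_cases a <;> fin_cases b <;> simp_all
      refine ⟨⟨![x, v, y], ?_⟩, hfinj⟩
      · intro a b hab
        rcases hP3 a b hab with ⟨ha, hb⟩ | ⟨ha, hb⟩ | ⟨ha, hb⟩ | ⟨ha, hb⟩ <;>
          subst ha <;> subst hb <;> simp only [Matrix.cons_val_zero, Matrix.cons_val_one,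
            Matrix.head_cons, Matrix.cons_val_two, Matrix.tail_cons]
        · exact hvx.symm
        · exact hvx
        · exact hvy
        · exact hvy.symm
    · -- red graph is a matching
      right
      push_neg at hp
      have hns : ∀ i j : Fin 13, c i = true → c j = true → sharesP i j = false := by
        intro i j hi hj
        have := hp i j hi hj
        exact Bool.not_eq_true _ ▸ this
      set S : Finset (Fin 13) := Finset.univ.filter (fun i => c i = true) with hS
      have hmemS : ∀ i : Fin 13, i ∈ S ↔ c i = true := by
        intro i; simp [hS]
      have hcard : S.card ≤ 3 := by
        by_contra hlt
        obtain ⟨T, hTS, hT4⟩ := Finset.exists_subset_card_eq (s := S) (n := 4) (by omega)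
        obtain ⟨a, t, hat, hins, ht3⟩ := (Finset.card_eq_succ (n := 3)).mp hT4
        rw [Finset.card_eq_three] at ht3
        obtain ⟨b, d, e, hbd, hbe, hde, rfl⟩ := ht3
        have hab : a ≠ b := fun h => hat (h ▸ by simp)
        have had : a ≠ d := fun h => hat (h ▸ by simp)
        have hae : a ≠ e := fun h => hat (h ▸ by simp)
        have hmem : ∀ z, z ∈ ({a, b, d, e} : Finset (Fin 13)) → c z = true := by
          intro z hz
          exact (hmemS z).mp (hTS (hins ▸ by simpa using hz))
        have ca := hmem a (by simp); have cb := hmem b (by simp)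
        have cd := hmem d (by simp); have ce := hmem e (by simp)
        exact hK5 a b d e hab had hae hbd hbe hde
          (hns _ _ ca cb) (hns _ _ ca cd) (hns _ _ ca ce)
          (hns _ _ cb cd) (hns _ _ cb ce) (hns _ _ cd ce)
      -- pick i j l with S ⊆ {i,j,l}, pairwise nonsharing
      have hkey : ∃ i j l : Fin 13, sharesP i j = false ∧ sharesP i l = false ∧
          sharesP j l = false ∧ ∀ m, m ∈ S → m = i ∨ m = j ∨ m = l := by
        have h03 : S.card = 0 ∨ S.card = 1 ∨ S.card = 2 ∨ S.card = 3 := by omega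
        rcases h03 with h | h | h | h
        · refine ⟨0, 0, 0, hdiag 0, hdiag 0, hdiag 0, ?_⟩
          rw [Finset.card_eq_zero] at h
          intro m hm; rw [h] at hm; simp at hm
        · rw [Finset.card_eq_one] at h
          obtain ⟨a, hSa⟩ := h
          refine ⟨a, a, a, hdiag a, hdiag a, hdiag a, fun m hm => ?_⟩
          rw [hSa] at hm; simp at hm; tauto
        · rw [Finset.card_eq_two] at h
          obtain ⟨a, b, hab, hSa⟩ := h
          have ca : c a = true := (hmemS a).mp (by rw [hSa]; simp)
          have cb : c b = true := (hmemS b).mp (by rw [hSa]; simp)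
          refine ⟨a, b, b, hns _ _ ca cb, hns _ _ ca cb, hdiag b, fun m hm => ?_⟩
          rw [hSa] at hm; simp at hm; tauto
        · rw [Finset.card_eq_three] at h
          obtain ⟨a, b, d, hab, had, hbd, hSa⟩ := h
          have ca : c a = true := (hmemS a).mp (by rw [hSa]; simp)
          have cb : c b = true := (hmemS b).mp (by rw [hSa]; simp)
          have cd : c d = true := (hmemS d).mp (by rw [hSa]; simp)
          refine ⟨a, b, d, hns _ _ ca cb, hns _ _ ca cd, hns _ _ cb cd, fun m hm => ?_⟩
          rw [hSa] at hm; simp at hm; tauto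
      obtain ⟨i, j, l, h1, h2, h3, hsub⟩ := hkey
      obtain ⟨k, hki, hkj, hkl⟩ := hK2 i j l ⟨h1, h2, h3⟩
      refine blue R hR k ?_
      intro x y hxy
      obtain ⟨m, hm⟩ := hK1 x y (hR hxy)
      have hcm : c m = true := by
        rcases hm with ⟨u1, u2⟩ | ⟨u1, u2⟩
        · exact hRc m (by rw [u1, u2]; exact hxy)
        · exact hRc m (by rw [u1, u2]; exact hxy.symm)
      rcases hsub m ((hmemS m).mpr hcm) with rfl | rfl | rfl
      · obtain ⟨t, ht⟩ := hki; exact ⟨t, ht ▸ hm⟩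
      · obtain ⟨t, ht⟩ := hkj; exact ⟨t, ht ▸ hm⟩
      · obtain ⟨t, ht⟩ := hkl; exact ⟨t, ht ▸ hm⟩
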